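/- Let μ = δ_{𝐑_1⁻¹B_1} ∗ δ_{𝐑_2⁻¹B_2} ∗ ⋯ be an infinite convolution of uniform atomic measures satisfying the no-overlap condition, with μ = μ_n ∗ μ_{>n}. If f = Σ_{𝐛∈𝐁_n} w_𝐛 1_{K_{𝐛,n}} is a step function adapted to level n, then for every λ ∈ ℝ^d: ∫ f(x) e^{-2πi⟨λ,x⟩} dμ(x) = (1/#𝐁_n) · μ̂_{>n}(λ) · Σ_{𝐛∈𝐁_n} w_𝐛 e^{-2πi⟨𝐑_n⁻¹𝐛, λ⟩}, and moreover ∫ |f|² dμ = (1/#𝐁_n) Σ_{𝐛∈𝐁_n} |w_𝐛|². -/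

import Mathlib

open Complex Matrix Finset

noncomputable section

/-- Real version of an integer matrix. -/
def realMat {d : ℕ} (R : Matrix (Fin d) (Fin d) ℤ) : Matrix (Fin d) (Fin d) ℝ :=
  R.map (Int.cast)

/-- `R` is expanding: all (complex) eigenvalues have modulus strictly greater than 1. -/
def Expanding {d : ℕ} (R : Matrix (Fin d) (Fin d) ℤ) : Prop :=
  ∀ z : ℂ, (R.map (Int.cast : ℤ → ℂ)).charpoly.IsRoot z → 1 < ‖z‖

/-- Euclidean inner product on `ℝ^d`. -/
def ip {d : ℕ} (x y : Fin d → ℝ) : ℝ := ∑ i, x i * y i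

/-- The vector `e_{R,λ} = (1/√#B) (e^{2πi⟨R⁻¹b,λ⟩})_{b∈B} ∈ ℂ^{#B}`. -/
def eVec {d : ℕ} (R : Matrix (Fin d) (Fin d) ℤ) (B : Finset (Fin d → ℤ))
    (lam : Fin d → ℤ) : B → ℂ :=
  fun b => ((Real.sqrt B.card : ℂ))⁻¹ *
    Complex.exp (2 * Real.pi * Complex.I *
      (ip ((realMat R)⁻¹ *ᵥ (fun j => ((b : Fin d → ℤ) j : ℝ))) (fun i => (lam i : ℝ))))

/-- `(R,B,L)` is a frame triple with bounds `C ≤ D`. -/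
def IsFrameTriple {d : ℕ} (R : Matrix (Fin d) (Fin d) ℤ) (B L : Finset (Fin d → ℤ))
    (C D : ℝ) : Prop :=
  ∀ x : B → ℂ,
    C * ∑ b, ‖x b‖ ^ 2 ≤ ∑ lam ∈ L, ‖∑ b, x b * (starRingEnd ℂ) (eVec R B lam b)‖ ^ 2 ∧
    ∑ lam ∈ L, ‖∑ b, x b * (starRingEnd ℂ) (eVec R B lam b)‖ ^ 2 ≤ D * ∑ b, ‖x b‖ ^ 2

/-- `(R,B,L)` is a Riesz sequence triple with bounds `C ≤ D`. -/
def IsRieszTriple {d : ℕ} (R : Matrix (Fin d) (Fin d) ℤ) (B L : Finset (Fin d → ℤ))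
    (C D : ℝ) : Prop :=
  ∀ a : L → ℂ,
    C * ∑ lam, ‖a lam‖ ^ 2 ≤ ∑ b, ‖∑ lam, a lam * eVec R B lam b‖ ^ 2 ∧
    ∑ b, ‖∑ lam, a lam * eVec R B lam b‖ ^ 2 ≤ D * ∑ lam, ‖a lam‖ ^ 2


/-- `𝐑_n = R_n ⋯ R_1` (with 0-based indexing: `bigR R n = R (n-1) * ⋯ * R 0`). -/
def bigR {d : ℕ} (R : ℕ → Matrix (Fin d) (Fin d) ℤ) : ℕ → Matrix (Fin d) (Fin d) ℤ
  | 0 => 1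
  | n + 1 => R n * bigR R n

def castVec {d : ℕ} (v : Fin d → ℤ) : Fin d → ℝ := fun i => (v i : ℝ)

/-- The point `𝐑_n⁻¹𝐛 = ∑_{k=1}^n 𝐑_k⁻¹ b_k` associated to a digit tuple. -/
def tuplePoint {d n : ℕ} (R : ℕ → Matrix (Fin d) (Fin d) ℤ) (B : ℕ → Finset (Fin d → ℤ))
    (t : (j : Fin n) → (B (j : ℕ))) : Fin d → ℝ :=
  ∑ j : Fin n, (realMat (bigR R ((j : ℕ) + 1)))⁻¹ *ᵥ castVec (t j)

/-- The frequency `λ = ∑_{k=1}^n (R_1ᵀ⋯R_{k-1}ᵀ) l_k ∈ Λ_n` associated to a tuple. -/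
def tupleFreq {d n : ℕ} (R : ℕ → Matrix (Fin d) (Fin d) ℤ) (L : ℕ → Finset (Fin d → ℤ))
    (l : (j : Fin n) → (L (j : ℕ))) : Fin d → ℤ :=
  ∑ j : Fin n, (bigR R (j : ℕ))ᵀ *ᵥ ((l j : Fin d → ℤ))

/-- The concatenated exponential vector entry
`(1/√(∏ #B_j)) e^{2πi ⟨𝐑_n⁻¹𝐛, λ⟩}` for the triple `(𝐑_n, 𝐁_n, Λ_n)`. -/
def bigEVec {d n : ℕ} (R : ℕ → Matrix (Fin d) (Fin d) ℤ) (B L : ℕ → Finset (Fin d → ℤ))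
    (t : (j : Fin n) → (B (j : ℕ))) (l : (j : Fin n) → (L (j : ℕ))) : ℂ :=
  ((Real.sqrt (∏ j ∈ Finset.range n, ((B j).card : ℝ)) : ℂ))⁻¹ *
    Complex.exp (2 * Real.pi * Complex.I *
      (ip (tuplePoint R B t) (castVec (tupleFreq R L l))))


open MeasureTheory

/-- The level-`n` measure `μ_n = δ_{𝐑_1⁻¹B_1} ∗ ⋯ ∗ δ_{𝐑_n⁻¹B_n}`, realized as the uniform
measure on the points `∑_{k=1}^n 𝐑_k⁻¹ b_k`, `b_k ∈ B_k`. -/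
def muLevel {d : ℕ} (R : ℕ → Matrix (Fin d) (Fin d) ℤ) (B : ℕ → Finset (Fin d → ℤ))
    (n : ℕ) : Measure (Fin d → ℝ) :=
  (∏ j ∈ Finset.range n, ((B j).card : ENNReal))⁻¹ •
    ∑ t : (j : Fin n) → (B (j : ℕ)), Measure.dirac (tuplePoint R B t)

/-- The tail attractor `K_n = {∑_{k=n+1}^∞ 𝐑_k⁻¹ b_k : b_k ∈ B_k}`. -/
def tailSet {d : ℕ} (R : ℕ → Matrix (Fin d) (Fin d) ℤ) (B : ℕ → Finset (Fin d → ℤ))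
    (n : ℕ) : Set (Fin d → ℝ) :=
  {x | ∃ b : ℕ → (Fin d → ℤ), (∀ k, b k ∈ B (n + k)) ∧
    x = ∑' k : ℕ, (realMat (bigR R (n + k + 1)))⁻¹ *ᵥ castVec (b k)}

/-- The cell `K_{𝐛,n} = 𝐑_n⁻¹𝐛 + K_n` attached to a digit tuple `𝐛 ∈ 𝐁_n`. -/
def cell {d n : ℕ} (R : ℕ → Matrix (Fin d) (Fin d) ℤ) (B : ℕ → Finset (Fin d → ℤ))
    (t : (j : Fin n) → (B (j : ℕ))) : Set (Fin d → ℝ) :=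
  (fun y => tuplePoint R B t + y) '' tailSet R B n

/-- The no-overlap condition for `μ`. -/
def NoOverlap {d : ℕ} (R : ℕ → Matrix (Fin d) (Fin d) ℤ) (B : ℕ → Finset (Fin d → ℤ))
    (μ : Measure (Fin d → ℝ)) : Prop :=
  ∀ (n : ℕ) (t t' : (j : Fin n) → (B (j : ℕ))), t ≠ t' →
    μ (cell R B t ∩ cell R B t') = 0

/-- The Fourier transform `μ̂(y) = ∫ e^{-2πi⟨y,x⟩} dμ(x)`. -/
def fourierTf {d : ℕ} (μ : Measure (Fin d → ℝ)) (y : Fin d → ℝ) : ℂ :=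
  ∫ x, Complex.exp (-(2 * Real.pi * Complex.I) * (ip y x)) ∂μ

open scoped ENNReal

private lemma smul_prod_meas {α β : Type*} [MeasurableSpace α] [MeasurableSpace β]
    (c : ℝ≥0∞) (m : Measure α) (ν : Measure β) [SigmaFinite m] [SigmaFinite ν]
    [SigmaFinite (c • m)] :
    (c • m).prod ν = c • (m.prod ν) := by
  refine Measure.prod_eq (μν := c • m.prod ν) (μ := c • m) (ν := ν) fun s t hs ht => ?_
  rw [Measure.smul_apply, Measure.prod_prod, Measure.smul_apply, smul_eq_mul, smul_eq_mul,
    mul_assoc]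

private lemma muLevel_conv {d n : ℕ} (R : ℕ → Matrix (Fin d) (Fin d) ℤ)
    (B : ℕ → Finset (Fin d → ℤ)) (hBne : ∀ j, (B j).Nonempty)
    (ν : Measure (Fin d → ℝ)) [IsProbabilityMeasure ν] :
    (muLevel R B n).conv ν = (∏ j ∈ Finset.range n, ((B j).card : ENNReal))⁻¹ •
      ∑ t : (j : Fin n) → (B (j : ℕ)), ν.map (fun y => tuplePoint R B t + y) := by
  set c : ℝ≥0∞ := (∏ j ∈ Finset.range n, ((B j).card : ENNReal))⁻¹ with hc
  set m : Measure (Fin d → ℝ) := ∑ t : (j : Fin n) → (B (j : ℕ)), Measure.dirac (tuplePoint R B t)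
    with hm
  have hmfin : IsFiniteMeasure m := by
    constructor
    rw [hm, Measure.coe_finset_sum]
    simp only [Finset.sum_apply, measure_univ, Finset.sum_const, nsmul_eq_mul, mul_one]
    exact ENNReal.natCast_lt_top _
  have hcne : c ≠ ⊤ := by
    rw [hc]
    refine ENNReal.inv_ne_top.mpr (Finset.prod_ne_zero_iff.mpr fun j _ => ?_)
    exact Nat.cast_ne_zero.mpr (Finset.card_ne_zero_of_mem (hBne j).choose_spec)
  have hcm : IsFiniteMeasure (c • m) := by
    constructor
    rw [Measure.smul_apply, smul_eq_mul]
    exact ENNReal.mul_lt_top hcne.lt_top (measure_lt_top m _)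
  have hdec : muLevel R B n = c • m := rfl
  rw [hdec]
  unfold Measure.conv
  rw [smul_prod_meas c m ν, Measure.map_smul]
  congr 1
  have h1 : m.prod ν = Measure.sum fun t : (j : Fin n) → (B (j : ℕ)) =>
      ν.map (Prod.mk (tuplePoint R B t)) := by
    rw [hm, ← Measure.sum_fintype, Measure.prod_sum_left]
    congr 1
    funext t
    exact Measure.dirac_prod (tuplePoint R B t)
  rw [h1, Measure.map_sum (by fun_prop), ← Measure.sum_fintype]
  congr 1
  funext t
  rw [Measure.map_map (by fun_prop) (by fun_prop)]
  rfl

private lemma key_ae {d n : ℕ} (R : ℕ → Matrix (Fin d) (Fin d) ℤ)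
    (B : ℕ → Finset (Fin d → ℤ)) (hBne : ∀ j, (B j).Nonempty)
    (μ ν : Measure (Fin d → ℝ)) [IsProbabilityMeasure μ] [IsProbabilityMeasure ν]
    (hν : ν ((tailSet R B n)ᶜ) = 0)
    (hconv : μ = Measure.conv (muLevel R B n) ν)
    (hno : NoOverlap R B μ)
    (w : ((j : Fin n) → (B (j : ℕ))) → ℂ)
    (t : (j : Fin n) → (B (j : ℕ))) :
    ∀ᵐ y ∂ν, (∑ t', w t' * Set.indicator (cell R B t') (fun _ => (1 : ℂ))
      (tuplePoint R B t + y)) = w t := by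
  have h1 : ∀ᵐ y ∂ν, y ∈ tailSet R B n := by
    rw [MeasureTheory.ae_iff]
    exact hν
  have hzero : ∀ t' : (j : Fin n) → (B (j : ℕ)), t' ≠ t →
      ν ((fun y => tuplePoint R B t + y) ⁻¹' (cell R B t ∩ cell R B t')) = 0 := by
    intro t' hne
    have hμ0 : μ (cell R B t ∩ cell R B t') = 0 := hno n t t' (Ne.symm hne)
    rw [hconv, muLevel_conv R B hBne ν] at hμ0
    rw [Measure.smul_apply, smul_eq_mul, mul_eq_zero] at hμ0
    have hcne : (∏ j ∈ Finset.range n, ((B j).card : ENNReal))⁻¹ ≠ 0 := by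
      refine ENNReal.inv_ne_zero.mpr ?_
      exact (ENNReal.prod_lt_top fun j _ => ENNReal.natCast_lt_top _).ne
    have hsum : (∑ t'' : (j : Fin n) → (B (j : ℕ)),
        ν.map (fun y => tuplePoint R B t'' + y)) (cell R B t ∩ cell R B t') = 0 := by
      rcases hμ0 with h | h
      · exact absurd h hcne
      · exact h
    rw [Measure.coe_finset_sum, Finset.sum_apply] at hsum
    have hterm : (ν.map (fun y => tuplePoint R B t + y)) (cell R B t ∩ cell R B t') = 0 :=
      (Finset.sum_eq_zero_iff.mp hsum) t (Finset.mem_univ t)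
    have hle := Measure.le_map_apply
      (f := fun y => tuplePoint R B t + y) (μ := ν) (by fun_prop)
      (cell R B t ∩ cell R B t')
    exact le_antisymm (hterm ▸ hle) zero_le
  have h2 : ∀ᵐ y ∂ν, ∀ t' : (j : Fin n) → (B (j : ℕ)), t' ≠ t →
      tuplePoint R B t + y ∉ cell R B t' := by
    rw [MeasureTheory.ae_all_iff]
    intro t'
    by_cases hne : t' = t
    · exact Filter.Eventually.of_forall fun y h' => absurd hne h'
    · have hpre : ν ((fun y => tuplePoint R B t + y) ⁻¹' (cell R B t')) = 0 := by
        refine measure_mono_null ?_ (measure_union_null (hzero t' hne) hν)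
        intro y hy
        by_cases hyt : y ∈ tailSet R B n
        · exact Or.inl ⟨⟨y, hyt, rfl⟩, hy⟩
        · exact Or.inr hyt
      rw [MeasureTheory.ae_iff]
      refine measure_mono_null ?_ hpre
      intro y hy
      simp only [Set.mem_setOf_eq, not_forall, not_not] at hy
      exact hy.2
  filter_upwards [h1, h2] with y hy hy2
  rw [Finset.sum_eq_single t]
  · have hmem : tuplePoint R B t + y ∈ cell R B t := ⟨y, hy, rfl⟩
    rw [Set.indicator_of_mem hmem, mul_one]
  · intro b _ hb
    rw [Set.indicator_of_notMem (hy2 b hb), mul_zero]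
  · intro h; exact absurd (Finset.mem_univ t) h

private lemma ip_add_right {d : ℕ} (lam p y : Fin d → ℝ) :
    ip lam (p + y) = ip lam p + ip lam y := by
  simp [ip, mul_add, Finset.sum_add_distrib]

private lemma ip_comm {d : ℕ} (x y : Fin d → ℝ) : ip x y = ip y x := by
  simp [ip, mul_comm]

private lemma contE {d : ℕ} (lam : Fin d → ℝ) :
    Continuous fun x : Fin d → ℝ => Complex.exp (-(2 * Real.pi * Complex.I) * (ip lam x)) := by
  refine Complex.continuous_exp.comp (continuous_const.mul ?_)
  refine Complex.continuous_ofReal.comp ?_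
  exact continuous_finset_sum _ fun i _ => continuous_const.mul (continuous_apply i)

private lemma normE (r : ℝ) : ‖Complex.exp (-(2 * Real.pi * Complex.I) * (r : ℂ))‖ = 1 := by
  have h : -(2 * (Real.pi : ℂ) * Complex.I) * (r : ℂ) = ((-(2 * Real.pi * r) : ℝ) : ℂ) * Complex.I := by
    push_cast; ring
  rw [h, Complex.norm_exp_ofReal_mul_I]

theorem step_function_fourier_coefficients {d n : ℕ}
    (R : ℕ → Matrix (Fin d) (Fin d) ℤ) (B : ℕ → Finset (Fin d → ℤ))
    (hexp : ∀ j, Expanding (R j)) (hBne : ∀ j, (B j).Nonempty)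
    (μ ν : Measure (Fin d → ℝ)) [IsProbabilityMeasure μ] [IsProbabilityMeasure ν]
    (hν : ν ((tailSet R B n)ᶜ) = 0)
    (hconv : μ = Measure.conv (muLevel R B n) ν)
    (hno : NoOverlap R B μ)
    (w : ((j : Fin n) → (B (j : ℕ))) → ℂ)
    (f : (Fin d → ℝ) → ℂ)
    (hf : f = fun x => ∑ t, w t * Set.indicator (cell R B t) (fun _ => (1 : ℂ)) x) :
    (∀ lam : Fin d → ℝ,
      ∫ x, f x * Complex.exp (-(2 * Real.pi * Complex.I) * ip lam x) ∂μ =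
        ((∏ j ∈ Finset.range n, ((B j).card : ℂ)))⁻¹ * fourierTf ν lam *
          ∑ t, w t * Complex.exp (-(2 * Real.pi * Complex.I) * ip (tuplePoint R B t) lam)) ∧
    ∫ x, ‖f x‖ ^ 2 ∂μ =
      ((∏ j ∈ Finset.range n, ((B j).card : ℝ)))⁻¹ * ∑ t, ‖w t‖ ^ 2 := by
  -- notation
  set c : ℝ≥0∞ := (∏ j ∈ Finset.range n, ((B j).card : ENNReal))⁻¹ with hc
  set p : ((j : Fin n) → (B (j : ℕ))) → (Fin d → ℝ) := tuplePoint R B with hp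
  -- the map measures
  set m : ((j : Fin n) → (B (j : ℕ))) → Measure (Fin d → ℝ) :=
    fun t => ν.map (fun y => p t + y) with hmdef
  have hmeas : ∀ t, Measurable fun y : Fin d → ℝ => p t + y := fun t => by fun_prop
  have hprob : ∀ t, IsProbabilityMeasure (m t) := fun t =>
    Measure.isProbabilityMeasure_map (hmeas t).aemeasurable
  have hctr : c.toReal = ((∏ j ∈ Finset.range n, ((B j).card : ℝ)))⁻¹ := by
    rw [hc, ENNReal.toReal_inv, ENNReal.toReal_prod]
    simp
  -- a.e. identification of f on each piece
  have hae : ∀ t, ∀ᵐ y ∂ν, f (p t + y) = w t := by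
    intro t
    have := key_ae R B hBne μ ν hν hconv hno w t
    filter_upwards [this] with y hy
    rw [hf]; exact hy
  have haemap : ∀ (t) (g h : (Fin d → ℝ) → ℂ),
      (∀ x, f x = w t → g x = h x) → g =ᵐ[m t] h := by
    intro t g h himp
    rw [Filter.EventuallyEq, MeasureTheory.ae_iff]
    have hmt : m t = ν.map ⇑(MeasurableEquiv.addLeft (p t)) := rfl
    rw [hmt, MeasurableEquiv.map_apply]
    refine measure_mono_null ?_ (MeasureTheory.ae_iff.mp (hae t))
    intro y hy
    simp only [Set.mem_preimage, Set.mem_setOf_eq] at hy ⊢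
    intro hfy
    exact hy (himp _ hfy)
  clear hf
  constructor
  · -- Fourier part
    intro lam
    set E : (Fin d → ℝ) → ℂ := fun x => Complex.exp (-(2 * Real.pi * Complex.I) * ip lam x)
      with hE
    have hEnorm : ∀ x, ‖E x‖ = 1 := fun x => normE (ip lam x)
    have hint : ∀ t, Integrable (fun x => w t * E x) (m t) := by
      intro t
      have := hprob t
      refine ⟨(continuous_const.mul (contE lam)).aestronglyMeasurable, ?_⟩
      refine MeasureTheory.HasFiniteIntegral.of_bounded (C := ‖w t‖)
        (Filter.Eventually.of_forall fun x => ?_)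
      rw [norm_mul, hEnorm, mul_one]
    have haet : ∀ t, (fun x => f x * E x) =ᵐ[m t] (fun x => w t * E x) := by
      intro t
      exact haemap t _ _ (fun x hx => by rw [hx])
    have hIg : ∀ t, Integrable (fun x => f x * E x) (m t) := fun t =>
      (hint t).congr (haet t).symm
    rw [hconv, muLevel_conv R B hBne ν, integral_smul_measure,
      MeasureTheory.integral_finset_sum_measure (fun t _ => hIg t)]
    have hterm : ∀ t, ∫ x, f x * E x ∂(m t) =
        w t * Complex.exp (-(2 * Real.pi * Complex.I) * ip lam (p t)) * fourierTf ν lam := by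
      intro t
      rw [MeasureTheory.integral_congr_ae (haet t)]
      rw [hmdef]
      rw [MeasureTheory.integral_map (f := fun x => w t * E x) (hmeas t).aemeasurable
        (continuous_const.mul (contE lam)).aestronglyMeasurable]
      have hsplit : ∀ y, w t * E (p t + y) =
          (w t * Complex.exp (-(2 * Real.pi * Complex.I) * ip lam (p t))) * E y := by
        intro y
        rw [hE]
        simp only [ip_add_right lam (p t) y]
        push_cast
        rw [mul_add, Complex.exp_add]
        ring
      simp_rw [hsplit]
      rw [MeasureTheory.integral_const_mul]
      rfl
    rw [Finset.sum_congr rfl (fun t _ => hterm t)]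
    rw [← Finset.sum_mul, Complex.real_smul]
    have hcast : (c.toReal : ℂ) = ((∏ j ∈ Finset.range n, ((B j).card : ℂ)))⁻¹ := by
      rw [hctr]; push_cast; ring
    rw [hcast]
    simp_rw [ip_comm lam]
    ring
  · -- Plancherel part
    have hint : ∀ t, Integrable (fun _ : Fin d → ℝ => ‖w t‖ ^ 2) (m t) := by
      intro t
      have := hprob t
      exact integrable_const _
    have haet : ∀ t, (fun x => ‖f x‖ ^ 2) =ᵐ[m t] (fun _ => ‖w t‖ ^ 2) := by
      intro t
      have h' : (fun x => f x) =ᵐ[m t] (fun _ => w t) := haemap t _ _ (fun x hx => hx)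
      filter_upwards [h'] with x hx
      rw [hx]
    have hIg : ∀ t, Integrable (fun x => ‖f x‖ ^ 2) (m t) := fun t =>
      (hint t).congr (haet t).symm
    rw [hconv, muLevel_conv R B hBne ν, integral_smul_measure,
      MeasureTheory.integral_finset_sum_measure (fun t _ => hIg t)]
    have hterm : ∀ t, ∫ x, ‖f x‖ ^ 2 ∂(m t) = ‖w t‖ ^ 2 := by
      intro t
      have := hprob t
      rw [MeasureTheory.integral_congr_ae (haet t), MeasureTheory.integral_const,
        probReal_univ, one_smul]
    rw [Finset.sum_congr rfl (fun t _ => hterm t), smul_eq_mul, hctr]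


end
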